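/- arXiv:2202.04033 — 3 statements merged into one kernel-verified Lean document; each statement's English description precedes it below -/
import Mathlib

section
/- Let Ω ⊆ ℝ^d be a connected open set and H an open affine half-space with σ_H(Ω) = Ω. Then both Ω ∩ H and Ω ∩ (closure(H))^c are connected. -/
open Set Metric MeasureTheory
open scoped ENNReal

noncomputable def sigmaH {d : ℕ} (h : EuclideanSpace ℝ (Fin d)) (c : ℝ)
    (x : EuclideanSpace ℝ (Fin d)) : EuclideanSpace ℝ (Fin d) :=
  x + (2 * (c - (inner ℝ x h : ℝ))) • h

def halfSp {d : ℕ} (h : EuclideanSpace ℝ (Fin d)) (c : ℝ) :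
    Set (EuclideanSpace ℝ (Fin d)) :=
  {x | (inner ℝ x h : ℝ) < c}

noncomputable def polz {d : ℕ} (h : EuclideanSpace ℝ (Fin d)) (c : ℝ)
    (A : Set (EuclideanSpace ℝ (Fin d))) : Set (EuclideanSpace ℝ (Fin d)) :=
  ((A ∪ sigmaH h c '' A) ∩ halfSp h c) ∪ (A ∩ sigmaH h c '' A)

noncomputable def dpolz {d : ℕ} (h : EuclideanSpace ℝ (Fin d)) (c : ℝ)
    (A : Set (EuclideanSpace ℝ (Fin d))) : Set (EuclideanSpace ℝ (Fin d)) :=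
  ((A ∪ sigmaH h c '' A) ∩ (halfSp h c)ᶜ) ∪ (A ∩ sigmaH h c '' A)

variable {d : ℕ} {h : EuclideanSpace ℝ (Fin d)} {c : ℝ}

lemma inner_shift (x : EuclideanSpace ℝ (Fin d)) (t : ℝ) (hh : ‖h‖ = 1) :
    (inner ℝ (x + t • h) h : ℝ) = inner ℝ x h + t := by
  rw [inner_add_left, real_inner_smul_left, real_inner_self_eq_norm_sq, hh]
  ring

lemma inner_sigmaH (hh : ‖h‖ = 1) (x : EuclideanSpace ℝ (Fin d)) :
    (inner ℝ (sigmaH h c x) h : ℝ) = 2*c - inner ℝ x h := by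
  rw [sigmaH, inner_shift x _ hh]; ring

lemma sigmaH_invol (hh : ‖h‖ = 1) (x : EuclideanSpace ℝ (Fin d)) :
    sigmaH h c (sigmaH h c x) = x := by
  rw [sigmaH, inner_sigmaH hh, sigmaH, add_assoc, ← add_smul]
  have : 2 * (c - (inner ℝ x h : ℝ)) + 2 * (c - (2 * c - inner ℝ x h)) = 0 := by ring
  rw [this, zero_smul, add_zero]

lemma sigmaH_cont : Continuous (sigmaH h c) := by
  unfold sigmaH
  fun_prop

lemma sigmaH_dist (hh : ‖h‖ = 1) (y z : EuclideanSpace ℝ (Fin d)) :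
    dist (sigmaH h c y) (sigmaH h c z) = dist y z := by
  have key : sigmaH h c y - sigmaH h c z
      = (y - z) - (2 * (inner ℝ (y - z) h : ℝ)) • h := by
    simp only [sigmaH, inner_sub_left]
    module
  rw [dist_eq_norm, dist_eq_norm, key]
  have h2 : ‖(y - z) - (2 * (inner ℝ (y-z) h : ℝ)) • h‖^2 = ‖y - z‖^2 := by
    rw [norm_sub_sq_real, real_inner_smul_right, norm_smul, mul_pow, hh]
    rw [Real.norm_eq_abs, sq_abs]
    ring
  have := congrArg Real.sqrt h2
  rwa [Real.sqrt_sq (norm_nonneg _), Real.sqrt_sq (norm_nonneg _)] at this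

lemma sigmaH_fixed (x : EuclideanSpace ℝ (Fin d)) (hx : (inner ℝ x h : ℝ) = c) :
    sigmaH h c x = x := by
  rw [sigmaH, hx]; simp

lemma halfSp_open : IsOpen (halfSp h c) :=
  isOpen_lt (Continuous.inner continuous_id continuous_const) continuous_const

lemma halfSp_convex : Convex ℝ (halfSp h c) :=
  convex_halfSpace_lt ⟨fun a b => inner_add_left a b h, fun t a => real_inner_smul_left a h t⟩ c

lemma closure_halfSp (hh : ‖h‖ = 1) :
    closure (halfSp h c) = {x | (inner ℝ x h : ℝ) ≤ c} := by
  apply subset_antisymm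
  · exact closure_minimal (fun x hx => show (inner ℝ x h:ℝ) ≤ c from le_of_lt hx)
      (isClosed_le (Continuous.inner continuous_id continuous_const) continuous_const)
  · intro x hx
    rw [Metric.mem_closure_iff]
    intro ε hε
    refine ⟨x + (-(ε/2)) • h, ?_, ?_⟩
    · show (inner ℝ (x + (-(ε/2)) • h) h : ℝ) < c
      rw [inner_shift x _ hh]
      have : (inner ℝ x h : ℝ) ≤ c := hx
      linarith
    · rw [dist_eq_norm]
      simp only [add_sub_cancel_left, sub_add_cancel_left]
      rw [norm_neg, norm_smul, hh, norm_neg, Real.norm_eq_abs, abs_of_pos (by linarith), mul_one]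
      linarith

/-- auxiliary: extension of a piece of `Ω ∩ H` to a symmetric open set. -/
def extSet (h : EuclideanSpace ℝ (Fin d)) (c : ℝ)
    (Ω u : Set (EuclideanSpace ℝ (Fin d))) : Set (EuclideanSpace ℝ (Fin d)) :=
  (Ω ∩ halfSp h c ∩ u) ∪ (sigmaH h c '' (Ω ∩ halfSp h c ∩ u)) ∪
    {x | (inner ℝ x h : ℝ) = c ∧ ∃ r > 0, ball x r ⊆ Ω ∧ ball x r ∩ halfSp h c ⊆ u}

lemma extSet_open (hh : ‖h‖ = 1) {Ω u : Set (EuclideanSpace ℝ (Fin d))}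
    (hΩo : IsOpen Ω) (hu : IsOpen u) : IsOpen (extSet h c Ω u) := by
  rw [Metric.isOpen_iff]
  rintro x ((hx | hx) | hx)
  · obtain ⟨r, hr, hball⟩ := Metric.isOpen_iff.1 ((hΩo.inter halfSp_open).inter hu) x hx
    exact ⟨r, hr, fun y hy => Or.inl (Or.inl (hball hy))⟩
  · have himg : sigmaH h c '' (Ω ∩ halfSp h c ∩ u) = sigmaH h c ⁻¹' (Ω ∩ halfSp h c ∩ u) := by
      ext z
      constructor
      · rintro ⟨w, hw, rfl⟩
        rwa [Set.mem_preimage, sigmaH_invol hh]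
      · intro hz
        exact ⟨sigmaH h c z, hz, sigmaH_invol hh z⟩
    rw [himg] at hx
    obtain ⟨r, hr, hball⟩ := Metric.isOpen_iff.1
      (((hΩo.inter halfSp_open).inter hu).preimage sigmaH_cont) x hx
    refine ⟨r, hr, fun y hy => Or.inl (Or.inr ?_)⟩
    rw [himg]
    exact hball hy
  · obtain ⟨hxc, r, hr, hbΩ, hbu⟩ := hx
    refine ⟨r, hr, fun y hy => ?_⟩
    rcases lt_trichotomy ((inner ℝ y h : ℝ)) c with hlt | heq | hgt
    · exact Or.inl (Or.inl ⟨⟨hbΩ hy, hlt⟩, hbu ⟨hy, hlt⟩⟩)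
    · refine Or.inr ⟨heq, r - dist y x, by simpa using (mem_ball.1 hy), ?_, ?_⟩
      · exact (ball_subset_ball' (by linarith)).trans hbΩ
      · exact (Set.inter_subset_inter_left _ (ball_subset_ball' (by linarith))).trans hbu
    · have hfix : sigmaH h c x = x := sigmaH_fixed x hxc
      have hdy : sigmaH h c y ∈ ball x r := by
        rw [mem_ball, ← hfix, sigmaH_dist hh]
        exact mem_ball.1 hy
      have hyH : sigmaH h c y ∈ halfSp h c := by
        show (inner ℝ (sigmaH h c y) h : ℝ) < c
        rw [inner_sigmaH hh]; linarith
      exact Or.inl (Or.inr ⟨sigmaH h c y, ⟨⟨hbΩ hdy, hyH⟩, hbu ⟨hdy, hyH⟩⟩, sigmaH_invol hh y⟩)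

lemma key_preconn (hh : ‖h‖ = 1) {Ω : Set (EuclideanSpace ℝ (Fin d))}
    (hΩo : IsOpen Ω) (hΩp : IsPreconnected Ω)
    (hsym : sigmaH h c '' Ω = Ω) : IsPreconnected (Ω ∩ halfSp h c) := by
  have hmem : ∀ x, x ∈ Ω → sigmaH h c x ∈ Ω := fun x hx => hsym ▸ mem_image_of_mem _ hx
  intro u v hu hv hcov ⟨a, ha⟩ ⟨b, hb⟩
  by_contra hcon
  rw [Set.not_nonempty_iff_eq_empty] at hcon
  have hdisj : ∀ x, x ∈ Ω → x ∈ halfSp h c → x ∈ u → x ∈ v → False := by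
    intro x h1 h2 h3 h4
    have : x ∈ Ω ∩ halfSp h c ∩ (u ∩ v) := ⟨⟨h1, h2⟩, h3, h4⟩
    rw [hcon] at this
    exact this
  -- cover
  have hcover : Ω ⊆ extSet h c Ω u ∪ extSet h c Ω v := by
    intro x hx
    rcases lt_trichotomy ((inner ℝ x h : ℝ)) c with hlt | heq | hgt
    · rcases hcov ⟨hx, hlt⟩ with hxu | hxv
      · exact Or.inl (Or.inl (Or.inl ⟨⟨hx, hlt⟩, hxu⟩))
      · exact Or.inr (Or.inl (Or.inl ⟨⟨hx, hlt⟩, hxv⟩))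
    · obtain ⟨r, hr, hball⟩ := Metric.isOpen_iff.1 hΩo x hx
      have hPsub : ball x r ∩ halfSp h c ⊆ Ω ∩ halfSp h c :=
        Set.inter_subset_inter_left _ hball
      have hP : IsPreconnected (ball x r ∩ halfSp h c) :=
        ((convex_ball x r).inter halfSp_convex).isPreconnected
      by_cases hPu : ball x r ∩ halfSp h c ⊆ u
      · exact Or.inl (Or.inr ⟨heq, r, hr, hball, hPu⟩)
      · have hPv : ball x r ∩ halfSp h c ⊆ v := by
          obtain ⟨w, hwP, hwu⟩ := Set.not_subset.1 hPu
          have hwv : w ∈ v := (hcov (hPsub hwP)).resolve_left hwu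
          intro z hz
          rcases hcov (hPsub hz) with hzu | hzv
          · obtain ⟨p, hpP, hpu, hpv⟩ :=
              hP u v hu hv (fun y hy => hcov (hPsub hy)) ⟨z, hz, hzu⟩ ⟨w, hwP, hwv⟩
            exact absurd (hdisj p (hPsub hpP).1 (hPsub hpP).2 hpu hpv) id
          · exact hzv
        exact Or.inr (Or.inr ⟨heq, r, hr, hball, hPv⟩)
    · have hσ : sigmaH h c x ∈ Ω ∩ halfSp h c := by
        refine ⟨hmem x hx, ?_⟩
        show (inner ℝ (sigmaH h c x) h : ℝ) < c
        rw [inner_sigmaH hh]; linarith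
      rcases hcov hσ with hxu | hxv
      · exact Or.inl (Or.inl (Or.inr ⟨sigmaH h c x, ⟨hσ, hxu⟩, sigmaH_invol hh x⟩))
      · exact Or.inr (Or.inl (Or.inr ⟨sigmaH h c x, ⟨hσ, hxv⟩, sigmaH_invol hh x⟩))
  -- apply preconnectedness of Ω
  obtain ⟨z, hzΩ, hzU, hzV⟩ := hΩp (extSet h c Ω u) (extSet h c Ω v)
    (extSet_open hh hΩo hu) (extSet_open hh hΩo hv) hcover
    ⟨a, ha.1.1, Or.inl (Or.inl ⟨ha.1, ha.2⟩)⟩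
    ⟨b, hb.1.1, Or.inl (Or.inl ⟨hb.1, hb.2⟩)⟩
  -- derive contradiction from z ∈ extSet u ∩ extSet v
  have sign : ∀ {w s}, w ∈ extSet h c Ω s →
      (w ∈ Ω ∩ halfSp h c ∩ s ∧ (inner ℝ w h : ℝ) < c) ∨
      (sigmaH h c w ∈ Ω ∩ halfSp h c ∩ s ∧ c < (inner ℝ w h : ℝ)) ∨
      ((inner ℝ w h : ℝ) = c ∧ ∃ r > 0, ball w r ⊆ Ω ∧ ball w r ∩ halfSp h c ⊆ s) := by
    rintro w s ((hw | ⟨p, hp, rfl⟩) | hw)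
    · exact Or.inl ⟨hw, hw.1.2⟩
    · refine Or.inr (Or.inl ⟨?_, ?_⟩)
      · rwa [sigmaH_invol hh]
      · rw [inner_sigmaH hh]
        have : (inner ℝ p h : ℝ) < c := hp.1.2
        linarith
    · exact Or.inr (Or.inr hw)
  rcases sign hzU with ⟨hU, hU'⟩ | ⟨hU, hU'⟩ | ⟨hUc, r₁, hr₁, hb₁, hu₁⟩ <;>
    rcases sign hzV with ⟨hV, hV'⟩ | ⟨hV, hV'⟩ | ⟨hVc, r₂, hr₂, hb₂, hv₂⟩
  · exact hdisj z hU.1.1 hU.1.2 hU.2 hV.2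
  · linarith
  · linarith
  · linarith
  · exact hdisj _ hU.1.1 hU.1.2 hU.2 hV.2
  · linarith
  · linarith
  · linarith
  · -- both boundary: construct a common point
    set r := min r₁ r₂ with hrdef
    have hrpos : 0 < r := lt_min hr₁ hr₂
    set w := z + (-(r/2)) • h with hwdef
    have hwd : dist w z = r / 2 := by
      rw [dist_eq_norm, hwdef, add_sub_cancel_left, norm_smul, hh, mul_one,
        Real.norm_eq_abs, abs_neg, abs_of_pos (by linarith)]
    have hw1 : w ∈ ball z r₁ := by
      rw [mem_ball, hwd]
      calc r / 2 < r := by linarith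
        _ ≤ r₁ := min_le_left _ _
    have hw2 : w ∈ ball z r₂ := by
      rw [mem_ball, hwd]
      calc r / 2 < r := by linarith
        _ ≤ r₂ := min_le_right _ _
    have hwH : w ∈ halfSp h c := by
      show (inner ℝ w h : ℝ) < c
      rw [hwdef, inner_shift z _ hh, hUc]
      linarith
    exact hdisj w (hb₁ hw1) hwH (hu₁ ⟨hw1, hwH⟩) (hv₂ ⟨hw2, hwH⟩)


/-- A symmetric domain intersected with the (open) half-space, and with the
complement of its closure, is connected. -/
theorem stmt8 {d : ℕ} (h : EuclideanSpace ℝ (Fin d)) (c : ℝ) (hh : ‖h‖ = 1)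
    (Ω : Set (EuclideanSpace ℝ (Fin d))) (hΩo : IsOpen Ω) (hΩc : IsConnected Ω)
    (hsym : sigmaH h c '' Ω = Ω) :
    IsConnected (Ω ∩ halfSp h c) ∧ IsConnected (Ω ∩ (closure (halfSp h c))ᶜ) := by
  have hmem : ∀ x, x ∈ Ω → sigmaH h c x ∈ Ω := fun x hx => hsym ▸ mem_image_of_mem _ hx
  -- nonemptiness of Ω ∩ halfSp
  have hne : (Ω ∩ halfSp h c).Nonempty := by
    obtain ⟨x, hx⟩ := hΩc.nonempty
    rcases lt_trichotomy ((inner ℝ x h : ℝ)) c with hlt | heq | hgt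
    · exact ⟨x, hx, hlt⟩
    · obtain ⟨r, hr, hball⟩ := Metric.isOpen_iff.1 hΩo x hx
      refine ⟨x + (-(r/2)) • h, hball ?_, ?_⟩
      · rw [mem_ball, dist_eq_norm, add_sub_cancel_left, norm_smul, hh, mul_one,
          Real.norm_eq_abs, abs_neg, abs_of_pos (by linarith)]
        linarith
      · show (inner ℝ (x + (-(r/2)) • h) h : ℝ) < c
        rw [inner_shift x _ hh, heq]
        linarith
    · refine ⟨sigmaH h c x, hmem x hx, ?_⟩
      show (inner ℝ (sigmaH h c x) h : ℝ) < c
      rw [inner_sigmaH hh]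
      linarith
  have h1 : IsConnected (Ω ∩ halfSp h c) :=
    ⟨hne, key_preconn hh hΩo hΩc.isPreconnected hsym⟩
  refine ⟨h1, ?_⟩
  have him : Ω ∩ (closure (halfSp h c))ᶜ = sigmaH h c '' (Ω ∩ halfSp h c) := by
    rw [closure_halfSp hh]
    ext x
    constructor
    · rintro ⟨hxΩ, hxc⟩
      simp only [Set.mem_compl_iff, Set.mem_setOf_eq, not_le] at hxc
      refine ⟨sigmaH h c x, ⟨hmem x hxΩ, ?_⟩, sigmaH_invol hh x⟩
      show (inner ℝ (sigmaH h c x) h : ℝ) < c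
      rw [inner_sigmaH hh]
      linarith
    · rintro ⟨w, ⟨hwΩ, hwH⟩, rfl⟩
      refine ⟨hmem w hwΩ, ?_⟩
      simp only [Set.mem_compl_iff, Set.mem_setOf_eq, not_le, inner_sigmaH hh]
      have : (inner ℝ w h : ℝ) < c := hwH
      linarith
  rw [him]
  exact h1.image _ sigmaH_cont.continuousOn
end

section
/- If a set A ⊆ ℝ^d is foliated Schwarz symmetric with respect to both rays a + ℝ⁺η and a − ℝ⁺η for some a ∈ ℝ^d and unit vector η, then A is radially symmetric with respect to a, i.e., for every r > 0, if A ∩ ∂B_r(a) ≠ ∅ then ∂B_r(a) ⊆ A. -/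
open Set Metric MeasureTheory
open scoped ENNReal

/-- Foliated Schwarz symmetry with respect to a ray. -/
def FSS {d : ℕ} (a η : EuclideanSpace ℝ (Fin d))
    (A : Set (EuclideanSpace ℝ (Fin d))) : Prop :=
  ∀ r : ℝ, 0 < r → ∃ ρ : ℝ, 0 ≤ ρ ∧
    A ∩ Metric.sphere a r = Metric.ball (a + r • η) ρ ∩ Metric.sphere a r

/-- A set foliated Schwarz symmetric with respect to two opposite rays is radial. -/
theorem stmt10 {d : ℕ} (a η : EuclideanSpace ℝ (Fin d)) (hη : ‖η‖ = 1)
    (A : Set (EuclideanSpace ℝ (Fin d)))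
    (h1 : FSS a η A) (h2 : FSS a (-η) A) :
    ∀ r : ℝ, 0 < r → (A ∩ Metric.sphere a r).Nonempty → Metric.sphere a r ⊆ A := by
  intro r hr hne
  obtain ⟨ρ₁, _, hA1⟩ := h1 r hr
  obtain ⟨ρ₂, _, hA2⟩ := h2 r hr
  obtain ⟨x, hxA, hxS⟩ := hne
  have hx1 : x ∈ Metric.ball (a + r • η) ρ₁ := by
    have : x ∈ A ∩ Metric.sphere a r := ⟨hxA, hxS⟩
    rw [hA1] at this; exact this.1
  have hx2 : x ∈ Metric.ball (a + r • (-η)) ρ₂ := by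
    have : x ∈ A ∩ Metric.sphere a r := ⟨hxA, hxS⟩
    rw [hA2] at this; exact this.1
  intro y hyS
  have key : ∀ z ∈ Metric.sphere a r,
      dist z (a + r • η) ^ 2 + dist z (a + r • (-η)) ^ 2 = 4 * r ^ 2 := by
    intro z hz
    have hz' : ‖z - a‖ = r := by rwa [mem_sphere_iff_norm] at hz
    have e1 : z - (a + r • η) = (z - a) - r • η := by abel
    have e2 : z - (a + r • (-η)) = (z - a) + r • η := by
      rw [smul_neg]; abel
    rw [dist_eq_norm, dist_eq_norm, e1, e2]
    have hp := parallelogram_law_with_norm ℝ (z - a) (r • η)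
    have hv : ‖r • η‖ = r := by
      rw [norm_smul, hη, mul_one, Real.norm_eq_abs, abs_of_pos hr]
    nlinarith [hp]
  by_cases hcase : dist y (a + r • η) < ρ₁
  · have : y ∈ A ∩ Metric.sphere a r := by
      rw [hA1]; exact ⟨Metric.mem_ball.mpr hcase, hyS⟩
    exact this.1
  · push_neg at hcase
    have hd1 : dist x (a + r • η) < dist y (a + r • η) :=
      lt_of_lt_of_le (Metric.mem_ball.mp hx1) hcase
    have hd2 : dist y (a + r • (-η)) < ρ₂ := by
      have kx := key x hxS
      have ky := key y hyS
      have hx2' := Metric.mem_ball.mp hx2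
      nlinarith [dist_nonneg (x := y) (y := a + r • (-η)),
        dist_nonneg (x := x) (y := a + r • (-η)),
        dist_nonneg (x := x) (y := a + r • η),
        dist_nonneg (x := y) (y := a + r • η)]
    have : y ∈ A ∩ Metric.sphere a r := by
      rw [hA2]; exact ⟨Metric.mem_ball.mpr hd2, hyS⟩
    exact this.1
end

section
/- Let Ω₀ ⊆ ℝ^d be open with σ_H(Ω₀) = Ω₀ for an open affine half-space H, and let u ∈ C^{0,α}(Ω₀) be Hölder continuous with exponent α ∈ (0,1] and constant L. Then the polarization P_H(u) is also Hölder continuous on Ω₀ with the same exponent α and the same constant L. -/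
open Set Metric MeasureTheory
open scoped ENNReal

/-- Polarization of a function. -/
noncomputable def polFun {d : ℕ} (h : EuclideanSpace ℝ (Fin d)) (c : ℝ)
    (u : EuclideanSpace ℝ (Fin d) → ℝ) (x : EuclideanSpace ℝ (Fin d)) : ℝ :=
  if (inner ℝ x h : ℝ) < c then max (u x) (u (sigmaH h c x))
  else min (u x) (u (sigmaH h c x))

section aux
variable {d : ℕ} (h : EuclideanSpace ℝ (Fin d)) (c : ℝ)

lemma normsq_aux (hh : ‖h‖ = 1) (v : EuclideanSpace ℝ (Fin d)) (t : ℝ) :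
    ‖v + t • h‖ ^ 2 = ‖v‖ ^ 2 + 2 * t * (inner ℝ v h : ℝ) + t ^ 2 := by
  rw [norm_add_sq_real, real_inner_smul_right, norm_smul, hh]
  simp [mul_pow, sq_abs]; ring

lemma norm_aux (hh : ‖h‖ = 1) (v : EuclideanSpace ℝ (Fin d)) (t : ℝ)
    (ht : 2 * t * (inner ℝ v h : ℝ) + t ^ 2 ≤ 0) : ‖v + t • h‖ ≤ ‖v‖ := by
  have h1 := normsq_aux h hh v t
  have : ‖v + t • h‖ ^ 2 ≤ ‖v‖ ^ 2 := by nlinarith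
  calc ‖v + t • h‖ = Real.sqrt (‖v + t • h‖ ^ 2) := (Real.sqrt_sq (norm_nonneg _)).symm
    _ ≤ Real.sqrt (‖v‖ ^ 2) := Real.sqrt_le_sqrt this
    _ = ‖v‖ := Real.sqrt_sq (norm_nonneg _)

lemma sigma_isom (hh : ‖h‖ = 1) (x y : EuclideanSpace ℝ (Fin d)) :
    ‖sigmaH h c x - sigmaH h c y‖ = ‖x - y‖ := by
  have e : sigmaH h c x - sigmaH h c y
      = (x - y) + (2 * ((inner ℝ y h : ℝ) - (inner ℝ x h : ℝ))) • h := by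
    simp only [sigmaH]; module
  have h1 := normsq_aux h hh (x - y) (2 * ((inner ℝ y h : ℝ) - (inner ℝ x h : ℝ)))
  rw [e]
  have hi : (inner ℝ (x - y) h : ℝ) = (inner ℝ x h : ℝ) - (inner ℝ y h : ℝ) := inner_sub_left x y h
  have : ‖(x - y) + (2 * ((inner ℝ y h : ℝ) - (inner ℝ x h : ℝ))) • h‖ ^ 2 = ‖x - y‖ ^ 2 := by
    rw [h1, hi]; ring
  calc ‖(x - y) + (2 * ((inner ℝ y h : ℝ) - (inner ℝ x h : ℝ))) • h‖
      = Real.sqrt (‖(x - y) + (2 * ((inner ℝ y h : ℝ) - (inner ℝ x h : ℝ))) • h‖ ^ 2) :=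
        (Real.sqrt_sq (norm_nonneg _)).symm
    _ = Real.sqrt (‖x - y‖ ^ 2) := by rw [this]
    _ = ‖x - y‖ := Real.sqrt_sq (norm_nonneg _)

lemma cross1 (hh : ‖h‖ = 1) (x y : EuclideanSpace ℝ (Fin d))
    (hx : (inner ℝ x h : ℝ) < c) (hy : c ≤ (inner ℝ y h : ℝ)) :
    ‖x - sigmaH h c y‖ ≤ ‖x - y‖ := by
  have e : x - sigmaH h c y = (x - y) + (2 * ((inner ℝ y h : ℝ) - c)) • h := by
    simp only [sigmaH]; module
  rw [e]
  apply norm_aux h hh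
  have hi : (inner ℝ (x - y) h : ℝ) = (inner ℝ x h : ℝ) - (inner ℝ y h : ℝ) := inner_sub_left x y h
  rw [hi]; nlinarith

lemma cross2 (hh : ‖h‖ = 1) (x y : EuclideanSpace ℝ (Fin d))
    (hx : (inner ℝ x h : ℝ) < c) (hy : c ≤ (inner ℝ y h : ℝ)) :
    ‖sigmaH h c x - y‖ ≤ ‖x - y‖ := by
  have e : sigmaH h c x - y = (x - y) + (2 * (c - (inner ℝ x h : ℝ))) • h := by
    simp only [sigmaH]; module
  rw [e]
  apply norm_aux h hh
  have hi : (inner ℝ (x - y) h : ℝ) = (inner ℝ x h : ℝ) - (inner ℝ y h : ℝ) := inner_sub_left x y h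
  rw [hi]; nlinarith

lemma abs_max_sub_min_le (a b p q : ℝ) :
    |max a b - min p q| ≤ max (max |a - p| |a - q|) (max |b - p| |b - q|) := by
  rcases max_cases a b with ⟨h1, _⟩ | ⟨h1, _⟩ <;> rcases min_cases p q with ⟨h2, _⟩ | ⟨h2, _⟩ <;>
    rw [h1, h2] <;> simp [le_max_iff]

end aux


/-- Polarization preserves Hölder continuity on a reflection-symmetric domain,
with the same exponent and constant. -/
theorem stmt15 {d : ℕ} (h : EuclideanSpace ℝ (Fin d)) (c : ℝ) (hh : ‖h‖ = 1)
    (Ω₀ : Set (EuclideanSpace ℝ (Fin d))) (hsym : sigmaH h c '' Ω₀ = Ω₀)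
    (α L : ℝ) (hα : 0 < α) (hα1 : α ≤ 1) (hL : 0 < L)
    (u : EuclideanSpace ℝ (Fin d) → ℝ)
    (hu : ∀ x ∈ Ω₀, ∀ y ∈ Ω₀, |u x - u y| ≤ L * ‖x - y‖ ^ α) :
    ∀ x ∈ Ω₀, ∀ y ∈ Ω₀, |polFun h c u x - polFun h c u y| ≤ L * ‖x - y‖ ^ α := by
  intro x hx y hy
  have hσmem : ∀ z ∈ Ω₀, sigmaH h c z ∈ Ω₀ := fun z hz => hsym ▸ ⟨z, hz, rfl⟩
  have hσx := hσmem x hx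
  have hσy := hσmem y hy
  have hbd : ∀ z ∈ Ω₀, ∀ w ∈ Ω₀, ‖z - w‖ ≤ ‖x - y‖ → |u z - u w| ≤ L * ‖x - y‖ ^ α := by
    intro z hz w hw hn
    refine (hu z hz w hw).trans ?_
    exact mul_le_mul_of_nonneg_left
      (Real.rpow_le_rpow (norm_nonneg _) hn hα.le) hL.le
  have h1 : |u x - u y| ≤ L * ‖x - y‖ ^ α := hbd x hx y hy le_rfl
  have h2 : |u (sigmaH h c x) - u (sigmaH h c y)| ≤ L * ‖x - y‖ ^ α :=
    hbd _ hσx _ hσy (le_of_eq (sigma_isom h c hh x y))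
  unfold polFun
  by_cases hx' : (inner ℝ x h : ℝ) < c <;> by_cases hy' : (inner ℝ y h : ℝ) < c
  · simp only [if_pos hx', if_pos hy']
    exact (abs_max_sub_max_le_max _ _ _ _).trans (max_le h1 h2)
  · simp only [if_pos hx', if_neg hy']
    have h3 : |u x - u (sigmaH h c y)| ≤ L * ‖x - y‖ ^ α :=
      hbd x hx _ hσy (cross1 h c hh x y hx' (not_lt.mp hy'))
    have h4 : |u (sigmaH h c x) - u y| ≤ L * ‖x - y‖ ^ α :=
      hbd _ hσx y hy (cross2 h c hh x y hx' (not_lt.mp hy'))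
    exact (abs_max_sub_min_le _ _ _ _).trans
      (max_le (max_le h1 h3) (max_le h4 h2))
  · simp only [if_neg hx', if_pos hy']
    have hle1 : ‖y - sigmaH h c x‖ ≤ ‖x - y‖ := by
      rw [norm_sub_rev x y]; exact cross1 h c hh y x hy' (not_lt.mp hx')
    have hle2 : ‖sigmaH h c y - x‖ ≤ ‖x - y‖ := by
      rw [norm_sub_rev x y]; exact cross2 h c hh y x hy' (not_lt.mp hx')
    have h3 : |u y - u (sigmaH h c x)| ≤ L * ‖x - y‖ ^ α := hbd y hy _ hσx hle1
    have h4 : |u (sigmaH h c y) - u x| ≤ L * ‖x - y‖ ^ α := hbd _ hσy x hx hle2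
    rw [abs_sub_comm]
    refine (abs_max_sub_min_le _ _ _ _).trans (max_le (max_le ?_ h3) (max_le h4 ?_))
    · rw [abs_sub_comm]; exact h1
    · rw [abs_sub_comm]; exact h2
  · simp only [if_neg hx', if_neg hy']
    exact (abs_min_sub_min_le_max _ _ _ _).trans (max_le h1 h2)
end
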